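/- Let K be a complete discretely valued field of characteristic p > 0 with valuation v, and fil_n W_{m+1}(K) the Brylinski–Kato filtration. Let n ≥ 1 and let y ∈ W_{m+1}(K) be such that F(y) − y ∈ fil_n W_{m+1}(K). Then y ∈ fil_{⌊n/p⌋} W_{m+1}(K), where ⌊·⌋ denotes the integer part. -/

import Mathlib

open Multiplicative

open MvPolynomial Finset

section WH
variable {σ τ : Type*} {R : Type*} [CommRing R]

theorem isWH_pow {w : σ → ℕ} {φ : MvPolynomial σ R} {m : ℕ}
    (hφ : φ.IsWeightedHomogeneous w m) (k : ℕ) :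
    (φ ^ k).IsWeightedHomogeneous w (k * m) := by
  induction k with
  | zero => simpa using MvPolynomial.isWeightedHomogeneous_one R w
  | succ k ih =>
      rw [pow_succ, Nat.succ_mul]
      exact ih.mul hφ

theorem isWH_aeval {w : σ → ℕ} {w' : τ → ℕ} {φ : MvPolynomial σ R} {m : ℕ}
    (hφ : φ.IsWeightedHomogeneous w m) {f : σ → MvPolynomial τ R}
    (hf : ∀ s, (f s).IsWeightedHomogeneous w' (w s)) :
    (MvPolynomial.aeval f φ).IsWeightedHomogeneous w' m := by
  classical
  conv_lhs => rw [φ.as_sum]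
  rw [map_sum]
  apply MvPolynomial.IsWeightedHomogeneous.sum
  intro d hd
  rw [MvPolynomial.aeval_monomial]
  have hw : (Finsupp.weight w) d = m := hφ (MvPolynomial.mem_support_iff.mp hd)
  have h2 : (d.prod fun i k => f i ^ k).IsWeightedHomogeneous w' m := by
    rw [Finsupp.prod]
    have hh := MvPolynomial.IsWeightedHomogeneous.prod d.support (fun i => f i ^ d i)
      (fun i => d i * w i) (w := w') ?_
    · convert hh using 1
      rw [← hw, Finsupp.weight_apply, Finsupp.sum]
      simp [mul_comm, smul_eq_mul]
    · intro i _
      simpa [mul_comm] using isWH_pow (hf i) (d i)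
  simpa using (MvPolynomial.isWeightedHomogeneous_C w' _).mul h2

end WH

section Witt
open Witt

variable (p : ℕ) [hp : Fact p.Prime]

theorem isWH_wittPolynomial (R : Type*) [CommRing R] (n : ℕ) :
    (wittPolynomial p R n).IsWeightedHomogeneous (fun j => p ^ j) (p ^ n) := by
  rw [wittPolynomial]
  apply MvPolynomial.IsWeightedHomogeneous.sum
  intro i hi
  apply MvPolynomial.isWeightedHomogeneous_monomial
  rw [Finsupp.weight_apply, Finsupp.sum_single_index]
  · rw [smul_eq_mul, ← pow_add, Nat.sub_add_cancel (Nat.lt_succ_iff.mp (mem_range.mp hi))]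
  · simp

theorem isWH_xInTermsOfW (R : Type*) [CommRing R] [Invertible (p : R)] (n : ℕ) :
    (xInTermsOfW p R n).IsWeightedHomogeneous (fun j => p ^ j) (p ^ n) := by
  induction n using Nat.strong_induction_on with
  | _ n ih =>
    rw [xInTermsOfW_eq]
    have h1 : (X (R := R) n - ∑ i ∈ range n, C ((p : R) ^ i) *
        xInTermsOfW p R i ^ p ^ (n - i)).IsWeightedHomogeneous (fun j => p ^ j) (p ^ n) := by
      rw [← mem_weightedHomogeneousSubmodule R]
      apply Submodule.sub_mem
      · exact isWeightedHomogeneous_X R _ n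
      · apply Submodule.sum_mem
        intro i hi
        rw [mem_weightedHomogeneousSubmodule]
        have h2 := (isWeightedHomogeneous_C (fun j => p ^ j) ((p : R) ^ i)).mul
          (isWH_pow (ih i (mem_range.mp hi)) (p ^ (n - i)))
        have : p ^ (n - i) * p ^ i = p ^ n := by
          rw [← pow_add, Nat.sub_add_cancel (le_of_lt (mem_range.mp hi))]
        rwa [zero_add, this] at h2
    have h3 := h1.mul (isWeightedHomogeneous_C (fun j => p ^ j) ((⅟(p : R)) ^ n))
    rwa [add_zero] at h3

theorem isWH_wittStructureRatAdd (n : ℕ) :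
    (wittStructureRat p (X (0 : Fin 2) + X 1) n).IsWeightedHomogeneous
      (fun s : Fin 2 × ℕ => p ^ s.2) (p ^ n) := by
  rw [wittStructureRat]
  apply isWH_aeval (w := fun j : ℕ => p ^ j) (isWH_xInTermsOfW p ℚ n)
  intro k
  show (MvPolynomial.aeval (fun i : Fin 2 => rename (Prod.mk i) (wittPolynomial p ℚ k))
      (X (0 : Fin 2) + X 1)).IsWeightedHomogeneous _ _
  rw [map_add, MvPolynomial.aeval_X, MvPolynomial.aeval_X]
  apply MvPolynomial.IsWeightedHomogeneous.add <;>
  · rw [MvPolynomial.rename_eq_aeval]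
    apply isWH_aeval (isWH_wittPolynomial p ℚ k)
    intro s
    exact isWeightedHomogeneous_X ℚ _ _

theorem isWH_wittAdd (n : ℕ) :
    (WittVector.wittAdd p n).IsWeightedHomogeneous (fun s : Fin 2 × ℕ => p ^ s.2) (p ^ n) := by
  intro d hd
  have hcoeff : coeff d (map (Int.castRingHom ℚ) (wittStructureInt p
      (X (0 : Fin 2) + X 1) n)) ≠ 0 := by
    rw [coeff_map]
    simpa [WittVector.wittAdd] using hd
  rw [map_wittStructureInt] at hcoeff
  have hΦ : (map (Int.castRingHom ℚ) (X (0 : Fin 2) + X 1)) = X 0 + X 1 := by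
    simp
  rw [hΦ] at hcoeff
  refine isWH_wittStructureRatAdd p n hcoeff

end Witt

section Val
variable {K : Type*} [Field K]

theorem val_natCast_le_one {Γ : Type*} [LinearOrderedCommGroupWithZero Γ]
    (v : Valuation K Γ) (k : ℕ) : v (k : K) ≤ 1 := by
  induction k with
  | zero => simp
  | succ k ih =>
      push_cast
      exact v.map_add_le ih (le_of_eq v.map_one)

theorem val_intCast_le_one {Γ : Type*} [LinearOrderedCommGroupWithZero Γ]
    (v : Valuation K Γ) (k : ℤ) : v (k : K) ≤ 1 := by
  obtain ⟨k, rfl | rfl⟩ := k.eq_nat_or_neg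
  · exact_mod_cast val_natCast_le_one v k
  · push_cast
    rw [Valuation.map_neg]
    exact_mod_cast val_natCast_le_one v k

theorem val_aeval_le {σ : Type*} (v : Valuation K (WithZero (Multiplicative ℤ)))
    (φ : MvPolynomial σ ℤ) {w : σ → ℕ} {D : ℕ}
    (hφ : φ.IsWeightedHomogeneous w D) (g : σ → K) (c : σ → ℕ) (N : ℕ)
    (hg : ∀ s, v (g s) ≤ ((ofAdd (c s : ℤ) : Multiplicative ℤ) : WithZero (Multiplicative ℤ)))
    (harith : ∀ d : σ →₀ ℕ, Finsupp.weight w d = D →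
      (∑ s ∈ d.support, d s * c s) ≤ N) :
    v (MvPolynomial.aeval g φ) ≤
      ((ofAdd (N : ℤ) : Multiplicative ℤ) : WithZero (Multiplicative ℤ)) := by
  classical
  rw [MvPolynomial.aeval_def, MvPolynomial.eval₂_eq]
  apply v.map_sum_le
  intro d hd
  rw [v.map_mul, map_prod]
  have h1 : v ((algebraMap ℤ K) (coeff d φ)) ≤ 1 := val_intCast_le_one v _
  have h2 : ∏ i ∈ d.support, v (g i ^ d i) ≤
      ((ofAdd ((∑ s ∈ d.support, d s * c s : ℕ) : ℤ) : Multiplicative ℤ) :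
        WithZero (Multiplicative ℤ)) := by
    calc ∏ i ∈ d.support, v (g i ^ d i)
        ≤ ∏ i ∈ d.support, ((ofAdd ((d i * c i : ℕ) : ℤ) : Multiplicative ℤ) :
            WithZero (Multiplicative ℤ)) := by
          apply Finset.prod_le_prod'
          intro i _
          rw [v.map_pow]
          calc v (g i) ^ d i ≤ ((ofAdd ((c i : ℕ) : ℤ) : Multiplicative ℤ) :
              WithZero (Multiplicative ℤ)) ^ d i := pow_le_pow_left' (hg i) _
            _ = _ := by
              rw [← WithZero.coe_pow, ← ofAdd_nsmul, nsmul_eq_mul]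
              norm_cast
      _ = _ := by
          have key : ∀ (s : Finset σ) (f : σ → ℤ),
              (∏ i ∈ s, ((ofAdd (f i) : Multiplicative ℤ) : WithZero (Multiplicative ℤ))) =
                ((ofAdd (∑ i ∈ s, f i) : Multiplicative ℤ) : WithZero (Multiplicative ℤ)) := by
            intro s f
            induction s using Finset.cons_induction with
            | empty => simp
            | cons a s ha ih =>
                rw [Finset.prod_cons, Finset.sum_cons, ih, ← WithZero.coe_mul, ← ofAdd_add]
          rw [key]
          norm_cast
  calc v _ * ∏ i ∈ d.support, v (g i ^ d i) ≤ 1 * ((ofAdd ((∑ s ∈ d.support, d s * c s : ℕ) : ℤ) :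
      Multiplicative ℤ) : WithZero (Multiplicative ℤ)) := mul_le_mul' h1 h2
    _ ≤ _ := by
        rw [one_mul, WithZero.coe_le_coe, Multiplicative.ofAdd_le]
        exact_mod_cast harith d (hφ (MvPolynomial.mem_support_iff.mp hd))

end Val

section Arith

theorem arith_key {σ : Type*} {p : ℕ} (hp : 1 < p) {m i : ℕ} (him : i ≤ m) (N : ℕ)
    (jj : σ → ℕ) (d : σ →₀ ℕ)
    (hw : ∑ s ∈ d.support, d s * p ^ jj s = p ^ i) :
    ∑ s ∈ d.support, d s * (N / p ^ (m - jj s)) ≤ N / p ^ (m - i) := by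
  have hp0 : 0 < p := lt_trans zero_lt_one hp
  rw [Nat.le_div_iff_mul_le (pow_pos hp0 (m - i))]
  refine Nat.le_of_mul_le_mul_right ?_ (pow_pos hp0 i)
  calc (∑ s ∈ d.support, d s * (N / p ^ (m - jj s))) * p ^ (m - i) * p ^ i
      = ∑ s ∈ d.support, d s * (N / p ^ (m - jj s)) * p ^ m := by
        rw [mul_assoc, ← pow_add, Nat.sub_add_cancel him, Finset.sum_mul]
    _ ≤ ∑ s ∈ d.support, N * (d s * p ^ jj s) := by
        apply Finset.sum_le_sum
        intro s hs
        have hds : d s ≠ 0 := Finsupp.mem_support_iff.mp hs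
        have hle : p ^ jj s ≤ p ^ i := by
          calc p ^ jj s ≤ d s * p ^ jj s :=
                Nat.le_mul_of_pos_left _ (Nat.pos_of_ne_zero hds)
            _ ≤ ∑ s ∈ d.support, d s * p ^ jj s :=
                Finset.single_le_sum (f := fun s => d s * p ^ jj s)
                  (fun _ _ => Nat.zero_le _) hs
            _ = p ^ i := hw
        have hji : jj s ≤ i := (Nat.pow_le_pow_iff_right hp).mp hle
        have hjm : jj s ≤ m := hji.trans him
        calc d s * (N / p ^ (m - jj s)) * p ^ m
            = d s * ((N / p ^ (m - jj s)) * p ^ (m - jj s)) * p ^ jj s := by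
              have hpm : p ^ (m - jj s) * p ^ jj s = p ^ m := by
                rw [← pow_add, Nat.sub_add_cancel hjm]
              rw [← hpm]; ring
          _ ≤ d s * N * p ^ jj s := by
              have h := Nat.div_mul_le_self N (p ^ (m - jj s))
              exact Nat.mul_le_mul_right _ (Nat.mul_le_mul_left _ h)
          _ = N * (d s * p ^ jj s) := by ring
    _ = N * p ^ i := by rw [← Finset.mul_sum, hw]

theorem pow_le_ofAdd_iff (u : WithZero (Multiplicative ℤ)) (k : ℕ) (hk : 0 < k) (n : ℕ) :
    u ^ k ≤ ((Multiplicative.ofAdd (n : ℤ) : Multiplicative ℤ) : WithZero (Multiplicative ℤ)) ↔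
      u ≤ ((Multiplicative.ofAdd ((n / k : ℕ) : ℤ) : Multiplicative ℤ) :
        WithZero (Multiplicative ℤ)) := by
  induction u using WithZero.recZeroCoe with
  | zero => simp [zero_pow hk.ne', WithZero.zero_le]
  | coe a =>
      rw [← WithZero.coe_pow, WithZero.coe_le_coe, WithZero.coe_le_coe]
      have ha : a ^ k = Multiplicative.ofAdd (k • Multiplicative.toAdd a) := by
        rw [ofAdd_nsmul, ofAdd_toAdd]
      rw [ha, Multiplicative.ofAdd_le]
      nth_rewrite 2 [← ofAdd_toAdd a]
      rw [Multiplicative.ofAdd_le, Int.natCast_ediv, nsmul_eq_mul, mul_comm]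
      exact (Int.le_ediv_iff_mul_le (by exact_mod_cast hk)).symm

end Arith

section Closure
variable {p : ℕ} [hp : Fact p.Prime] {K : Type*} [Field K]

theorem witt_add_coeff_le (v : Valuation K (WithZero (Multiplicative ℤ)))
    (m : ℕ) (x y : WittVector p K) (N i : ℕ) (him : i ≤ m)
    (hx : ∀ j, v (x.coeff j) ≤
      ((ofAdd ((N / p ^ (m - j) : ℕ) : ℤ) : Multiplicative ℤ) : WithZero (Multiplicative ℤ)))
    (hy : ∀ j, v (y.coeff j) ≤
      ((ofAdd ((N / p ^ (m - j) : ℕ) : ℤ) : Multiplicative ℤ) : WithZero (Multiplicative ℤ))) :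
    v ((x + y).coeff i) ≤
      ((ofAdd ((N / p ^ (m - i) : ℕ) : ℤ) : Multiplicative ℤ) : WithZero (Multiplicative ℤ)) := by
  rw [WittVector.add_coeff]
  show v (MvPolynomial.aeval _ _) ≤ _
  apply val_aeval_le v _ (isWH_wittAdd p i) _ (fun s : Fin 2 × ℕ => N / p ^ (m - s.2))
    (N / p ^ (m - i)) ?_ ?_
  · rintro ⟨b, j⟩
    fin_cases b
    · simpa [Function.uncurry] using hx j
    · simpa [Function.uncurry] using hy j
  · intro d hd
    apply arith_key hp.out.one_lt him N (fun s : Fin 2 × ℕ => s.2) d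
    rw [Finsupp.weight_apply, Finsupp.sum] at hd
    simpa [smul_eq_mul] using hd

end Closure

/-- The Brylinski–Kato filtration `fil_n W_{m+1}(K)` (multiplicative normalization:
additive valuation of `x` is `≥ −n` iff `Valued.v x ≤ ofAdd n`). -/
def brylinskiKatoFil (p : ℕ) [Fact p.Prime] (K : Type*) [Field K]
    [Valued K (WithZero (Multiplicative ℤ))] (m : ℕ) (n : ℤ) :
    Set (TruncatedWittVector p (m + 1) K) :=
  {w | ∀ i : Fin (m + 1),
    (Valued.v (w.coeff i)) ^ (p ^ (m - i.val)) ≤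
      ((Multiplicative.ofAdd n : Multiplicative ℤ) : WithZero (Multiplicative ℤ))}

/-- The Frobenius on `W_{m+1}(K)` for `K` of characteristic `p`: the componentwise
`p`-th power map. -/
def wittFrobenius (p : ℕ) [Fact p.Prime] (K : Type*) [Field K] (m : ℕ)
    (w : TruncatedWittVector p (m + 1) K) : TruncatedWittVector p (m + 1) K :=
  TruncatedWittVector.mk p (fun i => w.coeff i ^ p)

/-- Let `K` be a complete discretely valued field of characteristic
`p > 0`.  Let `n ≥ 1` and let `y ∈ W_{m+1}(K)` be such that `F(y) − y ∈ fil_n W_{m+1}(K)`.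
Then `y ∈ fil_{⌊n/p⌋} W_{m+1}(K)`. -/
theorem stmt9 (p : ℕ) [Fact p.Prime] (K : Type*) [Field K] [CharP K p]
    [Valued K (WithZero (Multiplicative ℤ))] [CompleteSpace K]
    (m : ℕ) (n : ℕ) (hn : 1 ≤ n) (y : TruncatedWittVector p (m + 1) K)
    (h : wittFrobenius p K m y - y ∈ brylinskiKatoFil p K m (n : ℤ)) :
    y ∈ brylinskiKatoFil p K m ((n / p : ℕ) : ℤ) := by
  classical
  have hp1 : 1 < p := (Fact.out : p.Prime).one_lt
  have hp0 : 0 < p := lt_trans zero_lt_one hp1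
  set v : Valuation K (WithZero (Multiplicative ℤ)) := Valued.v with hv
  set T : Fin (m + 1) → WithZero (Multiplicative ℤ) :=
    fun i => (v (y.coeff i)) ^ (p ^ (m - i.val)) with hT
  set S : WithZero (Multiplicative ℤ) := Finset.univ.sup T with hSdef
  intro i
  by_cases hS : S ≤ ((ofAdd ((n / p : ℕ) : ℤ) : Multiplicative ℤ) : WithZero (Multiplicative ℤ))
  · exact le_trans (Finset.le_sup (f := T) (Finset.mem_univ i)) hS
  exfalso
  have hlt : ((ofAdd ((n / p : ℕ) : ℤ) : Multiplicative ℤ) : WithZero (Multiplicative ℤ)) < S :=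
    lt_of_not_ge hS
  have hSne : S ≠ 0 := by
    intro h0
    rw [h0] at hlt
    exact absurd hlt (not_lt.mpr (WithZero.zero_le _))
  obtain ⟨g, hg⟩ := WithZero.ne_zero_iff_exists.mp hSne
  have hts : ((n / p : ℕ) : ℤ) < Multiplicative.toAdd g := by
    rw [← hg, WithZero.coe_lt_coe] at hlt
    rwa [← Multiplicative.ofAdd_lt, ofAdd_toAdd]
  set s' : ℕ := (Multiplicative.toAdd g).toNat with hs'
  have h0np : (0 : ℤ) ≤ ((n / p : ℕ) : ℤ) := Int.natCast_nonneg _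
  have hs'pos : 1 ≤ s' := by omega
  have hgs' : g = Multiplicative.ofAdd ((s' : ℕ) : ℤ) := by
    rw [← ofAdd_toAdd g]
    congr 1
    rw [hs', Int.toNat_of_nonneg (by omega)]
  -- main argument
  set A : TruncatedWittVector p (m + 1) K := wittFrobenius p K m y - y with hA
  set a : WittVector p K := A.out with ha'
  set b : WittVector p K := y.out with hb'
  set N : ℕ := p * s' - 1 with hN
  have hdiv : p * (n / p) + n % p = n := Nat.div_add_mod n p
  have hmod : n % p < p := Nat.mod_lt _ hp0
  have hquot : n / p + 1 ≤ s' := by omega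
  have hps : p * (n / p + 1) ≤ p * s' := Nat.mul_le_mul_left _ hquot
  have hps2 : p * (n / p + 1) = p * (n / p) + p := by ring
  have hnN : n ≤ N := by omega
  have h2s : 2 * s' ≤ p * s' := Nat.mul_le_mul_right _ hp1
  have hs'N : s' ≤ N := by omega
  have hcoe : ∀ (M M' : ℕ), M ≤ M' →
      ((ofAdd ((M : ℕ) : ℤ) : Multiplicative ℤ) : WithZero (Multiplicative ℤ)) ≤
        ((ofAdd ((M' : ℕ) : ℤ) : Multiplicative ℤ) : WithZero (Multiplicative ℤ)) := by
    intro M M' hMM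
    rw [WithZero.coe_le_coe, Multiplicative.ofAdd_le]
    exact_mod_cast hMM
  have hvzero : ∀ (x : TruncatedWittVector p (m + 1) K) (j : ℕ) (hj : ¬ j < m + 1),
      x.out.coeff j = 0 := by
    intro x j hj
    show (if h : j < m + 1 then x.coeff ⟨j, h⟩ else 0) = 0
    rw [dif_neg hj]
  have ha : ∀ j : ℕ, v (a.coeff j) ≤
      ((ofAdd ((N / p ^ (m - j) : ℕ) : ℤ) : Multiplicative ℤ) :
        WithZero (Multiplicative ℤ)) := by
    intro j
    by_cases hj : j < m + 1
    · have h1 := h ⟨j, hj⟩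
      have h2 : a.coeff j = A.coeff ⟨j, hj⟩ := TruncatedWittVector.coeff_out A ⟨j, hj⟩
      rw [h2]
      refine le_trans ((pow_le_ofAdd_iff _ _ (pow_pos hp0 (m - j)) n).mp h1) ?_
      exact hcoe _ _ (Nat.div_le_div_right hnN)
    · rw [hvzero A j hj, v.map_zero]
      exact WithZero.zero_le _
  have hb : ∀ j : ℕ, v (b.coeff j) ≤
      ((ofAdd ((N / p ^ (m - j) : ℕ) : ℤ) : Multiplicative ℤ) :
        WithZero (Multiplicative ℤ)) := by
    intro j
    by_cases hj : j < m + 1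
    · have h2 : b.coeff j = y.coeff ⟨j, hj⟩ := TruncatedWittVector.coeff_out y ⟨j, hj⟩
      rw [h2]
      have h1 : v (y.coeff ⟨j, hj⟩) ^ p ^ (m - j) ≤
          ((ofAdd ((s' : ℕ) : ℤ) : Multiplicative ℤ) : WithZero (Multiplicative ℤ)) := by
        have := Finset.le_sup (f := T) (Finset.mem_univ ⟨j, hj⟩)
        rw [← hSdef, ← hg, hgs'] at this
        exact this
      refine le_trans ((pow_le_ofAdd_iff _ _ (pow_pos hp0 (m - j)) s').mp h1) ?_
      exact hcoe _ _ (Nat.div_le_div_right hs'N)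
    · rw [hvzero y j hj, v.map_zero]
      exact WithZero.zero_le _
  obtain ⟨i₀, -, hi₀⟩ := Finset.exists_mem_eq_sup Finset.univ Finset.univ_nonempty T
  have him : (i₀ : ℕ) ≤ m := Nat.lt_succ_iff.mp i₀.isLt
  have key := witt_add_coeff_le v m a b N i₀ him ha hb
  have htrunc : (a + b).coeff (i₀ : ℕ) = y.coeff i₀ ^ p := by
    have h1 : WittVector.truncateFun (m + 1) (a + b) = wittFrobenius p K m y := by
      rw [WittVector.truncateFun_add, ha', hb',
        TruncatedWittVector.truncateFun_out, TruncatedWittVector.truncateFun_out, hA]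
      exact sub_add_cancel _ _
    have h2 := WittVector.coeff_truncateFun (a + b) i₀
    rw [h1] at h2
    rw [← h2, wittFrobenius, TruncatedWittVector.coeff_mk]
  rw [htrunc, v.map_pow] at key
  have key2 := pow_le_pow_left' key (p ^ (m - (i₀ : ℕ)))
  have hL : (v (y.coeff i₀) ^ p) ^ p ^ (m - (i₀ : ℕ)) =
      ((ofAdd ((p * s' : ℕ) : ℤ) : Multiplicative ℤ) : WithZero (Multiplicative ℤ)) := by
    rw [← pow_mul, mul_comm p (p ^ (m - (i₀ : ℕ))), pow_mul]
    have hTi : v (y.coeff i₀) ^ p ^ (m - (i₀ : ℕ)) = T i₀ := rfl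
    rw [hTi, ← hi₀, ← hSdef, ← hg, hgs', ← WithZero.coe_pow, ← ofAdd_nsmul, nsmul_eq_mul]
    norm_cast
  have hR : (((ofAdd ((N / p ^ (m - (i₀ : ℕ)) : ℕ) : ℤ) : Multiplicative ℤ) :
      WithZero (Multiplicative ℤ))) ^ p ^ (m - (i₀ : ℕ)) ≤
      ((ofAdd ((N : ℕ) : ℤ) : Multiplicative ℤ) : WithZero (Multiplicative ℤ)) := by
    rw [← WithZero.coe_pow, ← ofAdd_nsmul, nsmul_eq_mul]
    rw [WithZero.coe_le_coe, Multiplicative.ofAdd_le]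
    have := Nat.div_mul_le_self N (p ^ (m - (i₀ : ℕ)))
    calc ((p ^ (m - (i₀ : ℕ)) : ℕ) : ℤ) * ((N / p ^ (m - (i₀ : ℕ)) : ℕ) : ℤ)
        = ((N / p ^ (m - (i₀ : ℕ)) * p ^ (m - (i₀ : ℕ)) : ℕ) : ℤ) := by push_cast; ring
      _ ≤ (N : ℤ) := by exact_mod_cast this
  have hfinal : ((ofAdd ((p * s' : ℕ) : ℤ) : Multiplicative ℤ) :
      WithZero (Multiplicative ℤ)) ≤
      ((ofAdd ((N : ℕ) : ℤ) : Multiplicative ℤ) : WithZero (Multiplicative ℤ)) := by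
    rw [← hL]
    exact le_trans key2 hR
  rw [WithZero.coe_le_coe, Multiplicative.ofAdd_le] at hfinal
  have : p * s' ≤ N := by exact_mod_cast hfinal
  omega
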